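/- Let A ≥ 9 and define f_A(t) = sin(t)(cos(t) + √(A - sin²(t))). Then the second derivative f_A'' is negative on the open interval (0, π) and positive on (π, 2π). -/

import Mathlib

open Real

lemma f_deriv (A : ℝ) (hg : ∀ u : ℝ, 0 < A - Real.sin u ^ 2) (u : ℝ) :
    HasDerivAt (fun t => Real.sin t * (Real.cos t + Real.sqrt (A - Real.sin t ^ 2)))
      (Real.cos u * (Real.cos u + Real.sqrt (A - Real.sin u ^ 2)) +
        Real.sin u * (-Real.sin u +
          (-(2 * Real.sin u * Real.cos u)) / (2 * Real.sqrt (A - Real.sin u ^ 2)))) u := by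
  have hsq : HasDerivAt (fun x => A - Real.sin x ^ 2) (-(2 * Real.sin u * Real.cos u)) u := by
    have := ((Real.hasDerivAt_sin u).fun_pow 2)
    have h2 := this.const_sub A
    convert h2 using 1
    · rfl
    · rfl
    ring
  have hsqrt := hsq.sqrt (ne_of_gt (hg u))
  exact (Real.hasDerivAt_sin u).mul ((Real.hasDerivAt_cos u).add hsqrt)

lemma f1_deriv (A : ℝ) (hg : ∀ u : ℝ, 0 < A - Real.sin u ^ 2) (u : ℝ) :
    HasDerivAt (fun x => Real.cos x * (Real.cos x + Real.sqrt (A - Real.sin x ^ 2)) +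
        Real.sin x * (-Real.sin x +
          (-(2 * Real.sin x * Real.cos x)) / (2 * Real.sqrt (A - Real.sin x ^ 2))))
      (-(Real.sin u) * ((4 * Real.cos u * Real.sqrt (A - Real.sin u ^ 2) ^ 3
          + Real.sqrt (A - Real.sin u ^ 2) ^ 4
          + (3 * Real.cos u ^ 2 - Real.sin u ^ 2) * Real.sqrt (A - Real.sin u ^ 2) ^ 2
          + Real.sin u ^ 2 * Real.cos u ^ 2) / Real.sqrt (A - Real.sin u ^ 2) ^ 3)) u := by
  have hrpos : 0 < Real.sqrt (A - Real.sin u ^ 2) := Real.sqrt_pos.mpr (hg u)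
  have hsq : HasDerivAt (fun x => A - Real.sin x ^ 2) (-(2 * Real.sin u * Real.cos u)) u := by
    have := ((Real.hasDerivAt_sin u).fun_pow 2)
    have h2 := this.const_sub A
    convert h2 using 1
    · rfl
    · rfl
    ring
  have hsqrt := hsq.sqrt (ne_of_gt (hg u))
  have hp : HasDerivAt (fun x => -(2 * Real.sin x * Real.cos x))
      (-((0 * Real.sin u + 2 * Real.cos u) * Real.cos u + 2 * Real.sin u * (-Real.sin u))) u :=
    (((hasDerivAt_const u 2).mul (Real.hasDerivAt_sin u)).mul (Real.hasDerivAt_cos u)).neg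
  have h2q : HasDerivAt (fun x => 2 * Real.sqrt (A - Real.sin x ^ 2))
      (2 * (-(2 * Real.sin u * Real.cos u) / (2 * Real.sqrt (A - Real.sin u ^ 2)))) u :=
    hsqrt.const_mul 2
  have hden : 2 * Real.sqrt (A - Real.sin u ^ 2) ≠ 0 := by positivity
  have hdiv := hp.fun_div h2q hden
  have hterm2 := (Real.hasDerivAt_sin u).fun_mul ((Real.hasDerivAt_sin u).fun_neg.fun_add hdiv)
  have hterm1 := (Real.hasDerivAt_cos u).fun_mul ((Real.hasDerivAt_cos u).fun_add hsqrt)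
  have htotal := hterm1.fun_add hterm2
  convert htotal using 1
  · rfl
  · rfl
  have hr2 : Real.sqrt (A - Real.sin u ^ 2) ^ 2 = A - Real.sin u ^ 2 :=
    Real.sq_sqrt (hg u).le
  field_simp
  ring

lemma Ppos (A s c r : ℝ) (hA : 9 ≤ A) (hr : 0 < r) (hr2 : r ^ 2 = A - s ^ 2)
    (hpyth : s ^ 2 + c ^ 2 = 1) (hs : 0 < s ^ 2) :
    0 < 4 * c * r ^ 3 + r ^ 4 + (3 * c ^ 2 - s ^ 2) * r ^ 2 + s ^ 2 * c ^ 2 := by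
  have hc1 : c ^ 2 ≤ 1 := by nlinarith
  have h8 : 8 + c ^ 2 ≤ r ^ 2 := by nlinarith
  have hkey : 1 - 2 * c ≤ r := by
    rcases le_or_gt (1 - 2 * c) 0 with h | h
    · linarith
    · nlinarith [sq_nonneg (r - (1 - 2 * c)), sq_nonneg (c + 1)]
  have hfac : 0 ≤ r ^ 2 * ((r + 2 * c - 1) * (r + 2 * c + 1)) := by
    apply mul_nonneg (sq_nonneg r)
    apply mul_nonneg (by linarith) (by nlinarith)
  rcases lt_or_ge c 0 with hc | hc
  · have hc2 : 0 < c ^ 2 := by nlinarith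
    nlinarith [mul_pos hs hc2]
  · have hr1 : 1 < r := by nlinarith
    have : 0 < r ^ 2 * ((r + 2 * c - 1) * (r + 2 * c + 1)) := by
      apply mul_pos (by positivity)
      apply mul_pos (by linarith) (by linarith)
    nlinarith [mul_nonneg hs.le (sq_nonneg c)]

theorem stmt_0 (A : ℝ) (hA : 9 ≤ A) :
    (∀ t ∈ Set.Ioo (0 : ℝ) π,
      iteratedDeriv 2 (fun t => Real.sin t * (Real.cos t + Real.sqrt (A - Real.sin t ^ 2))) t < 0) ∧
    (∀ t ∈ Set.Ioo π (2 * π),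
      0 < iteratedDeriv 2 (fun t => Real.sin t * (Real.cos t + Real.sqrt (A - Real.sin t ^ 2))) t) := by
  have hg : ∀ u : ℝ, 0 < A - Real.sin u ^ 2 := by
    intro u
    nlinarith [Real.sin_sq_le_one u]
  have hiter : ∀ t : ℝ,
      iteratedDeriv 2 (fun t => Real.sin t * (Real.cos t + Real.sqrt (A - Real.sin t ^ 2))) t
        = -(Real.sin t) * ((4 * Real.cos t * Real.sqrt (A - Real.sin t ^ 2) ^ 3
          + Real.sqrt (A - Real.sin t ^ 2) ^ 4
          + (3 * Real.cos t ^ 2 - Real.sin t ^ 2) * Real.sqrt (A - Real.sin t ^ 2) ^ 2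
          + Real.sin t ^ 2 * Real.cos t ^ 2) / Real.sqrt (A - Real.sin t ^ 2) ^ 3) := by
    intro t
    have hd1 : deriv (fun t => Real.sin t * (Real.cos t + Real.sqrt (A - Real.sin t ^ 2)))
        = fun u => Real.cos u * (Real.cos u + Real.sqrt (A - Real.sin u ^ 2)) +
          Real.sin u * (-Real.sin u +
            (-(2 * Real.sin u * Real.cos u)) / (2 * Real.sqrt (A - Real.sin u ^ 2))) :=
      funext fun u => (f_deriv A hg u).deriv
    rw [iteratedDeriv_succ, iteratedDeriv_one, hd1]
    exact (f1_deriv A hg t).deriv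
  constructor
  · intro t ht
    have hs : 0 < Real.sin t := Real.sin_pos_of_pos_of_lt_pi ht.1 ht.2
    have hr : 0 < Real.sqrt (A - Real.sin t ^ 2) := Real.sqrt_pos.mpr (hg t)
    have hP := Ppos A (Real.sin t) (Real.cos t) (Real.sqrt (A - Real.sin t ^ 2)) hA hr
      (Real.sq_sqrt (hg t).le) (Real.sin_sq_add_cos_sq t) (by positivity)
    rw [hiter t]
    have : 0 < (4 * Real.cos t * Real.sqrt (A - Real.sin t ^ 2) ^ 3
        + Real.sqrt (A - Real.sin t ^ 2) ^ 4
        + (3 * Real.cos t ^ 2 - Real.sin t ^ 2) * Real.sqrt (A - Real.sin t ^ 2) ^ 2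
        + Real.sin t ^ 2 * Real.cos t ^ 2) / Real.sqrt (A - Real.sin t ^ 2) ^ 3 :=
      div_pos hP (by positivity)
    nlinarith [mul_pos hs this]
  · intro t ht
    have hs : Real.sin t < 0 := by
      have h1 : 0 < Real.sin (t - π) := by
        apply Real.sin_pos_of_pos_of_lt_pi <;> [linarith [ht.1]; linarith [ht.2]]
      rw [Real.sin_sub_pi] at h1
      linarith
    have hs2 : 0 < Real.sin t ^ 2 := by nlinarith
    have hr : 0 < Real.sqrt (A - Real.sin t ^ 2) := Real.sqrt_pos.mpr (hg t)
    have hP := Ppos A (Real.sin t) (Real.cos t) (Real.sqrt (A - Real.sin t ^ 2)) hA hr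
      (Real.sq_sqrt (hg t).le) (Real.sin_sq_add_cos_sq t) hs2
    rw [hiter t]
    have : 0 < (4 * Real.cos t * Real.sqrt (A - Real.sin t ^ 2) ^ 3
        + Real.sqrt (A - Real.sin t ^ 2) ^ 4
        + (3 * Real.cos t ^ 2 - Real.sin t ^ 2) * Real.sqrt (A - Real.sin t ^ 2) ^ 2
        + Real.sin t ^ 2 * Real.cos t ^ 2) / Real.sqrt (A - Real.sin t ^ 2) ^ 3 :=
      div_pos hP (by positivity)
    nlinarith [mul_pos (neg_pos.mpr hs) this]
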